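/- Fix a factor index i with 1 ≤ i ≤ m−1. Then Yᵀ P_U Y = Yᵀ P_V Y for every Y ∈ ℝⁿ (i.e. SS_{i;all} = SS_{i;m+1} identically, equivalently P_U = P_V) if and only if the proportional-frequency condition of Addelman holds for A_i: X_iᵀ X_j = (1/n)·(X_iᵀ 1_n)·(X_jᵀ 1_n)ᵀ for every j ≠ i with 1 ≤ j ≤ m (i.e. N_{ij} = r_i r_jᵀ / n, where N_{ij} = X_iᵀ X_j and r_i = X_iᵀ 1_n). -/

import Mathlib

open Matrix

/-- The column space of a real `n × p` matrix `A`, as a subspace of Euclidean `ℝⁿ`. -/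
noncomputable def colSpace {n p : ℕ} (A : Matrix (Fin n) (Fin p) ℝ) :
    Submodule ℝ (EuclideanSpace ℝ (Fin n)) :=
  Submodule.span ℝ (Set.range fun t => (WithLp.toLp 2 (fun i => A i t) : EuclideanSpace ℝ (Fin n)))

/-- The orthogonal projection of `ℝⁿ` onto a subspace `S`, as an endomorphism. -/
noncomputable def projS {n : ℕ} (S : Submodule ℝ (EuclideanSpace ℝ (Fin n))) :
    EuclideanSpace ℝ (Fin n) →L[ℝ] EuclideanSpace ℝ (Fin n) :=
  S.subtypeL.comp (S.orthogonalProjectionOnto)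

/-- `(I − P_S)·A`: the matrix whose columns are the residuals of the columns of `A`
after orthogonal projection onto `S`. -/
noncomputable def residualMat {n p : ℕ} (S : Submodule ℝ (EuclideanSpace ℝ (Fin n)))
    (A : Matrix (Fin n) (Fin p) ℝ) : Matrix (Fin n) (Fin p) ℝ := fun i t =>
  A i t - projS S (WithLp.toLp 2 (fun i' => A i' t)) i

/-- The column space of the concatenation `X_{T**}` of all design matrices except the
`i`-th together with the all-ones column (the general mean). -/
noncomputable def spanExcept {n m : ℕ} {c : Fin (m + 1) → ℕ}
    (X : (j : Fin (m + 1)) → Matrix (Fin n) (Fin (c j)) ℝ) (i : Fin (m + 1)) :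
    Submodule ℝ (EuclideanSpace ℝ (Fin n)) :=
  (⨆ j ∈ Finset.univ.erase i, colSpace (X j)) ⊔
    Submodule.span ℝ {(WithLp.toLp 2 (fun _ => (1 : ℝ)) : EuclideanSpace ℝ (Fin n))}

section Aux
open Submodule
variable {N : ℕ}

private lemma mem_orth_of_le {K : Submodule ℝ (EuclideanSpace ℝ (Fin N))}
    {v : EuclideanSpace ℝ (Fin N)} (h : K ≤ (ℝ ∙ v)ᗮ) : v ∈ Kᗮ :=
  Submodule.orthogonal_le h (Submodule.le_orthogonal_orthogonal _ (Submodule.mem_span_singleton_self v))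

private lemma inner_projS (K : Submodule ℝ (EuclideanSpace ℝ (Fin N)))
    (Y : EuclideanSpace ℝ (Fin N)) :
    (inner ℝ Y (projS K Y) : ℝ) = ‖(K.orthogonalProjectionOnto Y : EuclideanSpace ℝ (Fin N))‖ ^ 2 := by
  set p := (K.orthogonalProjectionOnto Y : EuclideanSpace ℝ (Fin N)) with hp
  have h0 : (inner ℝ (Y - p) p : ℝ) = 0 :=
    inner_left_of_mem_orthogonal (Submodule.coe_mem _) (Submodule.sub_starProjection_mem_orthogonal Y)
  rw [inner_sub_left] at h0
  have h2 : (inner ℝ Y p : ℝ) = inner ℝ p p := by linarith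
  calc (inner ℝ Y (projS K Y) : ℝ) = inner ℝ Y p := rfl
    _ = inner ℝ p p := h2
    _ = ‖p‖ ^ 2 := real_inner_self_eq_norm_sq p

private lemma le_of_norm_proj {W W' : Submodule ℝ (EuclideanSpace ℝ (Fin N))}
    (h : ∀ Y, ‖(W.orthogonalProjectionOnto Y : EuclideanSpace ℝ (Fin N))‖ ^ 2
      = ‖(orthogonalProjection W' Y : EuclideanSpace ℝ (Fin N))‖ ^ 2) : W ≤ W' := by
  intro y hy
  set p := (orthogonalProjection W' y : EuclideanSpace ℝ (Fin N)) with hp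
  have hyp : ‖p‖ ^ 2 = ‖y‖ ^ 2 := by
    rw [← h y]
    congr 2
    exact (Submodule.starProjection_eq_self_iff).2 hy
  have h0 : (inner ℝ p (y - p) : ℝ) = 0 :=
    inner_right_of_mem_orthogonal (Submodule.coe_mem _) (Submodule.sub_starProjection_mem_orthogonal y)
  have hpyth : ‖y‖ ^ 2 = ‖p‖ ^ 2 + ‖y - p‖ ^ 2 := by
    have hh := norm_add_sq_real p (y - p)
    rw [h0] at hh
    simpa using hh
  have h3 : ‖y - p‖ ^ 2 = 0 := by linarith
  have h4 : y - p = 0 := by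
    have := pow_eq_zero_iff (n := 2) (by norm_num) |>.1 h3
    simpa using this
  have h5 : y = p := by rwa [sub_eq_zero] at h4
  rw [h5]; exact Submodule.coe_mem _

private lemma subspace_eq_of_inner {W W' : Submodule ℝ (EuclideanSpace ℝ (Fin N))}
    (h : ∀ Y, (inner ℝ Y (projS W Y) : ℝ) = inner ℝ Y (projS W' Y)) : W = W' := by
  have h' : ∀ Y, ‖(W.orthogonalProjectionOnto Y : EuclideanSpace ℝ (Fin N))‖ ^ 2
      = ‖(orthogonalProjection W' Y : EuclideanSpace ℝ (Fin N))‖ ^ 2 := fun Y => by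
    rw [← inner_projS, ← inner_projS, h]
  exact le_antisymm (le_of_norm_proj h') (le_of_norm_proj fun Y => (h' Y).symm)

end Aux

/-- For a blocked main-effect plan with design matrices `X j` (the factor `Fin.last m`
being the block factor) and a treatment factor `i`, the adjusted sum of squares
`SS_{i;all} = Yᵀ P_U Y` (with `U = (I − P_{T**}) X_i`) coincides with the unadjusted sum
of squares `SS_{i;m+1} = Yᵀ P_V Y` (with `V = (I − P_{1_n}) X_i`) for every `Y` if and
only if the proportional-frequency condition of Addelman holds:
`X_iᵀ X_j = (1/n)·r_i·r_jᵀ` for every `j ≠ i`, where `r_j = X_jᵀ 1_n`. -/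
theorem ss_all_eq_ss_unadjusted_iff_pfc {n m : ℕ} {c : Fin (m + 1) → ℕ}
    (X : (j : Fin (m + 1)) → Matrix (Fin n) (Fin (c j)) ℝ)
    (hX01 : ∀ j r t, X j r t = 0 ∨ X j r t = 1)
    (hXrow : ∀ j r, ∑ t, X j r t = 1)
    (hn : 0 < n)
    (i : Fin (m + 1)) (hi : i ≠ Fin.last m) :
    (∀ Y : EuclideanSpace ℝ (Fin n),
        (inner ℝ Y (projS (colSpace (residualMat (spanExcept X i) (X i))) Y) : ℝ) =
          (inner ℝ Y (projS (colSpace (residualMat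
            (Submodule.span ℝ {(WithLp.toLp 2 (fun _ => (1 : ℝ)) : EuclideanSpace ℝ (Fin n))}) (X i))) Y) : ℝ)) ↔
      ∀ j : Fin (m + 1), j ≠ i →
        (X i)ᵀ * X j =
          (1 / (n : ℝ)) • vecMulVec ((X i)ᵀ *ᵥ fun _ => 1) ((X j)ᵀ *ᵥ fun _ => 1) := by
  classical
  set one : EuclideanSpace ℝ (Fin n) := WithLp.toLp 2 (fun _ => (1:ℝ)) with hone
  set L : Submodule ℝ (EuclideanSpace ℝ (Fin n)) := Submodule.span ℝ {one} with hLdef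
  set S : Submodule ℝ (EuclideanSpace ℝ (Fin n)) := spanExcept X i with hSdef
  have hLS : L ≤ S := le_sup_right
  -- columns
  set col : (j : Fin (m + 1)) → Fin (c j) → EuclideanSpace ℝ (Fin n) :=
    fun j t => WithLp.toLp 2 (fun r => X j r t) with hcol
  set a : Fin (c i) → ℝ := fun t => ∑ r, X i r t with ha
  -- norm of ones
  have hinner_one : ∀ w : EuclideanSpace ℝ (Fin n), (inner ℝ one w : ℝ) = ∑ r, w r := by
    intro w; simp [PiLp.inner_apply, RCLike.inner_apply, hone]
  have hnorm_one : ‖one‖ ^ 2 = (n : ℝ) := by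
    rw [← real_inner_self_eq_norm_sq, hinner_one]
    simp [hone]
  -- projection onto L
  have hprojL : ∀ (t : Fin (c i)) (r : Fin n),
      (L.orthogonalProjectionOnto (col i t) : EuclideanSpace ℝ (Fin n)) r = a t / n := by
    intro t r
    have hOP : (L.orthogonalProjectionOnto (col i t) : EuclideanSpace ℝ (Fin n))
        = ((inner ℝ one (col i t) : ℝ) / ((‖one‖ ^ 2 : ℝ) : ℝ)) • one :=
      Submodule.starProjection_singleton ℝ (col i t)
    have h1 : (inner ℝ one (col i t) : ℝ) = a t := by
      rw [hinner_one]
    rw [hOP, h1, hnorm_one]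
    simp [hone]
  -- V and U columns
  set V : Matrix (Fin n) (Fin (c i)) ℝ := residualMat L (X i) with hV
  set U : Matrix (Fin n) (Fin (c i)) ℝ := residualMat S (X i) with hU
  have hVcol : ∀ t, (WithLp.toLp 2 (fun r => V r t) : EuclideanSpace ℝ (Fin n))
      = col i t - (L.orthogonalProjectionOnto (col i t) : EuclideanSpace ℝ (Fin n)) := fun t => rfl
  have hUcol : ∀ t, (WithLp.toLp 2 (fun r => U r t) : EuclideanSpace ℝ (Fin n))
      = col i t - (S.orthogonalProjectionOnto (col i t) : EuclideanSpace ℝ (Fin n)) := fun t => rfl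
  have hUorthS : ∀ t, (WithLp.toLp 2 (fun r => U r t) : EuclideanSpace ℝ (Fin n)) ∈ Sᗮ := fun t =>
    (hUcol t) ▸ Submodule.sub_starProjection_mem_orthogonal (col i t)
  -- inner ℝ product of a column of X j with a column of V
  have hinnerV : ∀ (j : Fin (m + 1)) (s : Fin (c j)) (t : Fin (c i)),
      (inner ℝ (col j s) (WithLp.toLp 2 (fun r => V r t) : EuclideanSpace ℝ (Fin n)) : ℝ)
        = (∑ r, X j r s * X i r t) - a t / n * ∑ r, X j r s := by
    intro j s t
    have : ∀ r : Fin n, V r t = X i r t - a t / n := by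
      intro r
      have := congrArg (fun v => v r) (hVcol t)
      simp only [PiLp.sub_apply, hprojL t r] at this
      simpa [hcol] using this
    calc (inner ℝ (col j s) (WithLp.toLp 2 (fun r => V r t) : EuclideanSpace ℝ (Fin n)) : ℝ)
        = ∑ r, X j r s * (X i r t - a t / n) := by
          simp [PiLp.inner_apply, RCLike.inner_apply, this, hcol]
          exact Finset.sum_congr rfl fun r _ => mul_comm _ _
      _ = (∑ r, X j r s * X i r t) - a t / n * ∑ r, X j r s := by
          rw [Finset.mul_sum, ← Finset.sum_sub_distrib]
          exact Finset.sum_congr rfl fun r _ => by ring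
  -- entries of r vectors
  have hb : ∀ (j : Fin (m + 1)) (s : Fin (c j)), ((X j)ᵀ *ᵥ fun _ => 1) s = ∑ r, X j r s := by
    intro j s; simp [Matrix.mulVec, dotProduct]
  -- PFC for factor j ↔ columns of V orthogonal to columns of X j
  have hpfc_iff : ∀ j : Fin (m + 1),
      ((X i)ᵀ * X j = (1 / (n : ℝ)) • vecMulVec ((X i)ᵀ *ᵥ fun _ => 1) ((X j)ᵀ *ᵥ fun _ => 1))
        ↔ ∀ (s : Fin (c j)) (t : Fin (c i)),
            (inner ℝ (col j s) (WithLp.toLp 2 (fun r => V r t) : EuclideanSpace ℝ (Fin n)) : ℝ) = 0 := by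
    intro j
    rw [← Matrix.ext_iff]
    constructor
    · intro h s t
      have h1 := h t s
      rw [Matrix.mul_apply, Matrix.smul_apply, Matrix.vecMulVec_apply, hb, hb] at h1
      simp only [Matrix.transpose_apply, smul_eq_mul] at h1
      rw [hinnerV]
      have hps : ∑ r, X j r s * X i r t = ∑ r, X i r t * X j r s :=
        Finset.sum_congr rfl fun r _ => mul_comm _ _
      rw [hps, h1, ha]
      ring
    · intro h
      intro t s
      have h1 := h s t
      rw [hinnerV, sub_eq_zero] at h1
      rw [Matrix.mul_apply, Matrix.smul_apply, Matrix.vecMulVec_apply, hb, hb]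
      simp only [Matrix.transpose_apply, smul_eq_mul]
      have hps : ∑ r, X i r t * X j r s = ∑ r, X j r s * X i r t :=
        Finset.sum_congr rfl fun r _ => mul_comm _ _
      rw [hps, h1, ha]
      ring
  -- V's columns are orthogonal to L
  have hVorthL : ∀ t, (WithLp.toLp 2 (fun r => V r t) : EuclideanSpace ℝ (Fin n)) ∈ Lᗮ := fun t =>
    (hVcol t) ▸ Submodule.sub_starProjection_mem_orthogonal (col i t)
  -- columns of X j for j ≠ i lie in S
  have hcolS : ∀ (j : Fin (m + 1)), j ≠ i → ∀ (s : Fin (c j)), col j s ∈ S := by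
    intro j hj s
    have h1 : colSpace (X j) ≤ S := by
      rw [hSdef, spanExcept]
      exact le_trans
        (le_iSup₂ (f := fun (j : Fin (m + 1)) (_ : j ∈ Finset.univ.erase i) => colSpace (X j)) j
          (Finset.mem_erase.2 ⟨hj, Finset.mem_univ j⟩)) le_sup_left
    exact h1 (Submodule.subset_span ⟨s, rfl⟩)
  -- Step 1: orthogonality of V columns to all other factors implies U = V
  have step1 : (∀ j : Fin (m + 1), j ≠ i →
      ∀ (s : Fin (c j)) (t : Fin (c i)),
        (inner ℝ (col j s) (WithLp.toLp 2 (fun r => V r t) : EuclideanSpace ℝ (Fin n)) : ℝ) = 0) → U = V := by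
    intro h
    have hproj : ∀ t, (S.orthogonalProjectionOnto (col i t) : EuclideanSpace ℝ (Fin n))
        = (L.orthogonalProjectionOnto (col i t) : EuclideanSpace ℝ (Fin n)) := by
      intro t
      apply Submodule.eq_starProjection_of_mem_orthogonal (hLS (Submodule.coe_mem _))
      rw [← hVcol t]
      apply mem_orth_of_le
      rw [hSdef, spanExcept]
      apply sup_le
      · refine iSup_le fun j => iSup_le fun hj => Submodule.span_le.2 ?_
        rintro _ ⟨s, rfl⟩
        rw [SetLike.mem_coe, Submodule.mem_orthogonal_singleton_iff_inner_right]
        rw [real_inner_comm]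
        exact h j (Finset.mem_erase.1 hj).1 s t
      · rw [Submodule.span_le]
        intro x hx
        rw [Set.mem_singleton_iff] at hx
        subst hx
        rw [SetLike.mem_coe, Submodule.mem_orthogonal_singleton_iff_inner_right]
        rw [real_inner_comm]
        exact Submodule.inner_right_of_mem_orthogonal (Submodule.mem_span_singleton_self one) (hVorthL t)
    ext r t
    show X i r t - (S.orthogonalProjectionOnto (col i t) : EuclideanSpace ℝ (Fin n)) r
        = X i r t - (L.orthogonalProjectionOnto (col i t) : EuclideanSpace ℝ (Fin n)) r
    rw [congrArg (fun v => v r) (hproj t)]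
  -- Step 2: equality of residual column spaces implies U = V
  have step2 : colSpace U = colSpace V → U = V := by
    intro hcs
    have hUle : colSpace U ≤ Sᗮ := Submodule.span_le.2 (by rintro _ ⟨t, rfl⟩; exact hUorthS t)
    have hVS : ∀ t, (WithLp.toLp 2 (fun r => V r t) : EuclideanSpace ℝ (Fin n)) ∈ Sᗮ := fun t =>
      (hcs ▸ hUle) (Submodule.subset_span ⟨t, rfl⟩)
    have hzero : ∀ t, (WithLp.toLp 2 (fun r => V r t) : EuclideanSpace ℝ (Fin n)) = WithLp.toLp 2 (fun r => U r t) := by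
      intro t
      have h1 : ((WithLp.toLp 2 (fun r => V r t) : EuclideanSpace ℝ (Fin n)) - WithLp.toLp 2 (fun r => U r t)) ∈ Sᗮ :=
        sub_mem (hVS t) (hUorthS t)
      have h2 : ((WithLp.toLp 2 (fun r => V r t) : EuclideanSpace ℝ (Fin n)) - WithLp.toLp 2 (fun r => U r t)) ∈ S := by
        have e : ((WithLp.toLp 2 (fun r => V r t) : EuclideanSpace ℝ (Fin n)) - WithLp.toLp 2 (fun r => U r t))
            = (S.orthogonalProjectionOnto (col i t) : EuclideanSpace ℝ (Fin n))
              - (L.orthogonalProjectionOnto (col i t) : EuclideanSpace ℝ (Fin n)) := by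
          rw [hVcol, hUcol]; abel
        rw [e]
        exact sub_mem (Submodule.coe_mem _) (hLS (Submodule.coe_mem _))
      have h3 : ((WithLp.toLp 2 (fun r => V r t) : EuclideanSpace ℝ (Fin n)) - WithLp.toLp 2 (fun r => U r t)) ∈ (⊥ : Submodule ℝ (EuclideanSpace ℝ (Fin n))) :=
        (Submodule.orthogonal_disjoint S).le_bot (Submodule.mem_inf.2 ⟨h2, h1⟩)
      rw [Submodule.mem_bot] at h3
      rwa [sub_eq_zero] at h3
    ext r t
    exact (congrArg (fun v => v r) (hzero t)).symm
  -- Step 3: U = V implies orthogonality of V columns to all other factors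
  have step3 : U = V → ∀ j : Fin (m + 1), j ≠ i →
      ∀ (s : Fin (c j)) (t : Fin (c i)),
        (inner ℝ (col j s) (WithLp.toLp 2 (fun r => V r t) : EuclideanSpace ℝ (Fin n)) : ℝ) = 0 := by
    intro hUV j hj s t
    have hVmem : (WithLp.toLp 2 (fun r => V r t) : EuclideanSpace ℝ (Fin n)) ∈ Sᗮ := by
      rw [← hUV]; exact hUorthS t
    exact Submodule.inner_right_of_mem_orthogonal (hcolS j hj s) hVmem
  constructor
  · intro hY
    have hcs : colSpace U = colSpace V := subspace_eq_of_inner hY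
    have hUV := step2 hcs
    intro j hj
    exact (hpfc_iff j).2 (step3 hUV j hj)
  · intro hpfc Y
    have hUV : U = V := step1 fun j hj => (hpfc_iff j).1 (hpfc j hj)
    rw [hUV]
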